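/- Let n ≥ 1, let P be a probability measure, and let E₁, H₁, …, Eₙ, Hₙ be measurable events with P(Hᵢ) > 0 for all i; set pᵢ = P(Eᵢ|Hᵢ). Then l ≤ P(⋃ᵢ(Eᵢ∩Hᵢ) | ⋃ᵢ Hᵢ) ≤ min(p₁ + ⋯ + pₙ, 1), where l = 0 if pᵢ = 0 for at least one i, and l = 1/(1 + Σᵢ (1−pᵢ)/pᵢ) if pᵢ > 0 for all i. -/

import Mathlib

open MeasureTheory Set
open scoped Classical

/-- Conditional probability `P(E|H) = P(E ∩ H)/P(H)` as a real number. -/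
noncomputable def condP {Ω : Type*} [MeasurableSpace Ω] (μ : Measure Ω) (E H : Set Ω) : ℝ :=
  (μ (E ∩ H)).toReal / (μ H).toReal

theorem quasi_disjunction_bounds_n {Ω : Type*} [MeasurableSpace Ω]
    (μ : Measure Ω) [IsProbabilityMeasure μ] (n : ℕ) (hn : 1 ≤ n)
    (E H : Fin n → Set Ω)
    (hE : ∀ i, MeasurableSet (E i)) (hH : ∀ i, MeasurableSet (H i))
    (hpos : ∀ i, 0 < μ (H i))
    (p : Fin n → ℝ) (hp : ∀ i, p i = condP μ (E i) (H i)) :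
    (if ∃ i, p i = 0 then 0 else 1 / (1 + ∑ i, (1 - p i) / p i)) ≤
        condP μ (⋃ i, (E i ∩ H i)) (⋃ i, H i) ∧
      condP μ (⋃ i, (E i ∩ H i)) (⋃ i, H i) ≤ min (∑ i, p i) 1 := by
  have hfin : ∀ s : Set Ω, μ s ≠ ⊤ := fun s => measure_ne_top μ s
  set a : Fin n → ℝ := fun i => (μ (E i ∩ H i)).toReal with ha_def
  set h : Fin n → ℝ := fun i => (μ (H i)).toReal with hh_def
  have hh : ∀ i, 0 < h i := fun i => ENNReal.toReal_pos (hpos i).ne' (hfin _)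
  have ha_nonneg : ∀ i, 0 ≤ a i := fun i => ENNReal.toReal_nonneg
  have hale : ∀ i, a i ≤ h i := fun i =>
    ENNReal.toReal_mono (hfin _) (measure_mono inter_subset_right)
  have hpeq : ∀ i, p i = a i / h i := hp
  have hp_nonneg : ∀ i, 0 ≤ p i := fun i => by
    rw [hpeq]; exact div_nonneg (ha_nonneg i) (hh i).le
  have hp_le_one : ∀ i, p i ≤ 1 := fun i => by
    rw [hpeq]; exact div_le_one_of_le₀ (hale i) (hh i).le
  have hah : ∀ i, a i = p i * h i := fun i => by
    rw [hpeq]; exact (div_mul_cancel₀ _ (hh i).ne').symm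
  set A : ℝ := (μ (⋃ i, E i ∩ H i)).toReal with hA_def
  set B : ℝ := (μ (⋃ i, H i)).toReal with hB_def
  obtain ⟨i0⟩ : Nonempty (Fin n) := ⟨⟨0, hn⟩⟩
  have hB : 0 < B :=
    ENNReal.toReal_pos (lt_of_lt_of_le (hpos i0) (measure_mono (subset_iUnion H i0))).ne'
      (hfin _)
  have hAB : A ≤ B :=
    ENNReal.toReal_mono (hfin _)
      (measure_mono (iUnion_mono fun i => inter_subset_right))
  have hA_nonneg : 0 ≤ A := ENNReal.toReal_nonneg
  have haA : ∀ i, a i ≤ A := fun i =>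
    ENNReal.toReal_mono (hfin _) (measure_mono (subset_iUnion (fun j => E j ∩ H j) i))
  have hhB : ∀ i, h i ≤ B := fun i =>
    ENNReal.toReal_mono (hfin _) (measure_mono (subset_iUnion _ i))
  have hAsum : A ≤ ∑ i, a i := by
    have h1 : μ (⋃ i, E i ∩ H i) ≤ ∑ i, μ (E i ∩ H i) :=
      measure_iUnion_fintype_le μ _
    have h2 : (∑ i, μ (E i ∩ H i)).toReal = ∑ i, a i :=
      ENNReal.toReal_sum (fun i _ => hfin _)
    calc A ≤ (∑ i, μ (E i ∩ H i)).toReal :=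
          ENNReal.toReal_mono (by simp [hfin]) h1
      _ = ∑ i, a i := h2
  have hcond : condP μ (⋃ i, (E i ∩ H i)) (⋃ i, H i) = A / B := by
    rw [condP, hA_def, hB_def,
      inter_eq_left.mpr (iUnion_mono fun i => (inter_subset_right : E i ∩ H i ⊆ H i))]
  constructor
  · -- lower bound
    rw [hcond]
    by_cases hz : ∃ i, p i = 0
    · rw [if_pos hz]
      exact div_nonneg hA_nonneg hB.le
    · rw [if_neg hz]
      push_neg at hz
      have hp_pos : ∀ i, 0 < p i := fun i => (hp_nonneg i).lt_of_ne' (hz i)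
      set S : ℝ := ∑ i, (1 - p i) / p i with hS_def
      have hS_nonneg : 0 ≤ S :=
        Finset.sum_nonneg fun i _ => div_nonneg (by linarith [hp_le_one i]) (hp_pos i).le
      have hA_pos : 0 < A := by
        have : 0 < a i0 := by
          rw [hah i0]; exact mul_pos (hp_pos i0) (hh i0)
        linarith [haA i0]
      -- B ≤ A + ∑ (h i - a i)
      have hkey : B ≤ A + ∑ i, (h i - a i) := by
        have hsubset : (⋃ i, H i) ⊆ (⋃ i, E i ∩ H i) ∪ ⋃ i, H i \ (E i ∩ H i) := by
          intro x hx
          obtain ⟨i, hi⟩ := mem_iUnion.mp hx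
          by_cases hxE : x ∈ E i ∩ H i
          · exact Or.inl (mem_iUnion.mpr ⟨i, hxE⟩)
          · exact Or.inr (mem_iUnion.mpr ⟨i, hi, hxE⟩)
        have h1 : μ (⋃ i, H i) ≤ μ (⋃ i, E i ∩ H i) + ∑ i, μ (H i \ (E i ∩ H i)) :=
          le_trans (measure_mono hsubset)
            (le_trans (measure_union_le _ _)
              (add_le_add_right (measure_iUnion_fintype_le μ _) _))
        have h2 : ∀ i, (μ (H i \ (E i ∩ H i))).toReal = h i - a i := by
          intro i
          rw [measure_diff inter_subset_right ((hE i).inter (hH i)).nullMeasurableSet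
            (hfin _), ENNReal.toReal_sub_of_le (measure_mono inter_subset_right) (hfin _)]
        calc B ≤ (μ (⋃ i, E i ∩ H i) + ∑ i, μ (H i \ (E i ∩ H i))).toReal :=
              ENNReal.toReal_mono (by simp [hfin, ENNReal.add_ne_top,
                ENNReal.sum_ne_top]) h1
          _ = A + ∑ i, (h i - a i) := by
              rw [ENNReal.toReal_add (hfin _) (by simp [ENNReal.sum_ne_top, hfin]),
                ENNReal.toReal_sum (fun i _ => hfin _)]
              congr 1
              exact Finset.sum_congr rfl fun i _ => h2 i
      have hterm : ∀ i, h i - a i = a i * ((1 - p i) / p i) := by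
        intro i
        rw [hah i]
        field_simp [hz i]
      have hsum2 : ∑ i, (h i - a i) ≤ A * S := by
        rw [hS_def, Finset.mul_sum]
        apply Finset.sum_le_sum
        intro i _
        rw [hterm i]
        exact mul_le_mul_of_nonneg_right (haA i)
          (div_nonneg (by linarith [hp_le_one i]) (hp_pos i).le)
      have hBle : B ≤ A * (1 + S) := by nlinarith
      rw [div_le_div_iff₀ (by linarith) hB]
      nlinarith
  · -- upper bound
    rw [hcond]
    refine le_min ?_ ((div_le_one hB).mpr hAB)
    rw [div_le_iff₀ hB]
    calc A ≤ ∑ i, a i := hAsum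
      _ ≤ ∑ i, p i * B := Finset.sum_le_sum fun i _ => by
          rw [hah i]
          exact mul_le_mul_of_nonneg_left (hhB i) (hp_nonneg i)
      _ = (∑ i, p i) * B := by rw [Finset.sum_mul]
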